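/- Let S be a finite, degree independent set of dominant rational self-maps of projective N-space over the algebraic closure of Q, let ν be a probability measure on S, and let (Φ_S, ν̄) be the space of i.i.d. sequences of elements of S distributed according to ν. Then for every point P ∈ P^N(Q̄)_S, one has limsup_{n→∞} h(γ_n(P))^{1/n} ≤ δ_{S,ν} for ν̄-almost every sequence γ ∈ Φ_S, where δ_{S,ν} = exp( inf_{n≥1} E_n[log deg(γ_n)]/n ) is the dynamical degree of (S, ν). -/

import Mathlib

/-!
Statement 4 (Theorem `arith<dyn`): almost sure upper bound of the height growth
rate in random orbits by the dynamical degree.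

Abstract model of `ℙ^N(ℚ̄)` with its dominant rational self-maps: `Pt` is the
set of points `ℙ^N(ℚ̄)`, `M` the monoid of dominant rational self-maps under
composition acting on points (`MulAction M Pt`; values on the indeterminacy
locus are irrelevant junk values), `deg : M → ℕ` the degree (`deg ≥ 1`,
`deg id = 1`, submultiplicative), `indet f` the indeterminacy locus of `f`,
and `h : Pt → ℝ` the absolute Weil height.  The standard facts recorded as
hypotheses: `h ≥ 0`; for each dominant rational map `f` there is a constant `C`
with `h(f(Q)) ≤ deg f · h(Q) + C` away from `indet f`; and the indeterminacy
locus of a composite is controlled: `I_{f∘g} ⊆ I_g ∪ g⁻¹(I_f)`.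

The finite set `S` of maps is `F : S → M`, degree independence says every
composition `γ_n` (`n ≥ 1`) of maps from `S` has degree at least `2`, and
`ℙ^N(ℚ̄)_S` is the set of points `P` whose full forward orbits avoid
`I_S = ⋃_{φ∈S} I_φ` (the case `n = 0` gives `P ∉ I_S`).  `Φ_S = ℕ → S` carries
the i.i.d. product measure `μ = ν̄`, characterized on cylinder sets, and the
dynamical degree is `δ_{S,ν} = exp(inf_{n≥1} E_n[log deg γ_n]/n)`.
-/

open MeasureTheory Filter

/-- `γ_n = θ_n ∘ θ_{n-1} ∘ ⋯ ∘ θ_1` for the sequence `γ = (θ_1, θ_2, …)`,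
`θ_{i+1} = γ i`; by convention `γ_0 = id`. -/
def seqComp {S M : Type*} [Monoid M] (F : S → M) (γ : ℕ → S) : ℕ → M
  | 0 => 1
  | n + 1 => F (γ n) * seqComp F γ n

namespace SeqCompAux

variable {S M : Type*} [Monoid M] (F : S → M)

lemma seqComp_congr {γ γ' : ℕ → S} (n : ℕ) (hn : ∀ i < n, γ i = γ' i) :
    seqComp F γ n = seqComp F γ' n := by
  induction n with
  | zero => rfl
  | succ k ih =>
      simp only [seqComp, hn k (Nat.lt_succ_self k),
        ih (fun i hi => hn i (hi.trans (Nat.lt_succ_self k)))]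

lemma seqComp_shift (γ : ℕ → S) (a b : ℕ) :
    seqComp F γ (a + b) = seqComp F (fun i => γ (a + i)) b * seqComp F γ a := by
  induction b with
  | zero => simp [seqComp]
  | succ k ih =>
      show F (γ (a + k)) * seqComp F γ (a + k) = _
      rw [ih, seqComp, ← mul_assoc]

/-- degree of a composition is at most `D^n` if each factor has degree `≤ D`. -/
lemma deg_seqComp_le (deg : M → ℕ) (hdeg_id : deg 1 = 1)
    (hdeg_comp : ∀ f g : M, deg (f * g) ≤ deg f * deg g)
    (D : ℕ) (hD : ∀ s : S, deg (F s) ≤ D) (γ : ℕ → S) (n : ℕ) :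
    deg (seqComp F γ n) ≤ D ^ n := by
  induction n with
  | zero => simp [seqComp, hdeg_id]
  | succ k ih =>
      calc deg (seqComp F γ (k+1)) ≤ deg (F (γ k)) * deg (seqComp F γ k) :=
            hdeg_comp _ _
        _ ≤ D * D ^ k := Nat.mul_le_mul (hD _) ih
        _ = D ^ (k+1) := (pow_succ' D k).symm

end SeqCompAux


namespace RndHtAux

variable {S : Type*} [Fintype S] [MeasurableSpace S] [DiscreteMeasurableSpace S] [Nonempty S]

/-- restriction of a sequence to its first `k` values -/
def res (k : ℕ) (γ : ℕ → S) : Fin k → S := fun i => γ i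

/-- extension of a tuple to a sequence (junk values beyond `k`) -/
noncomputable def ext (k : ℕ) (w : Fin k → S) : ℕ → S :=
  fun i => if h : i < k then w ⟨i, h⟩ else Classical.arbitrary S

lemma ext_res (k : ℕ) (γ : ℕ → S) {i : ℕ} (hi : i < k) : ext k (res k γ) i = γ i := by
  simp [ext, res, hi]

lemma measurable_res (k : ℕ) : Measurable (res (S := S) k) :=
  measurable_pi_lambda _ fun i => measurable_pi_apply _

variable (ν : Measure S) [IsProbabilityMeasure ν]

/-- probability weight of a cylinder -/
noncomputable def pw {k : ℕ} (w : Fin k → S) : ℝ := ∏ i, (ν {w i}).toReal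

lemma pw_nonneg {k : ℕ} (w : Fin k → S) : 0 ≤ pw ν w :=
  Finset.prod_nonneg fun _ _ => ENNReal.toReal_nonneg

variable (μ : Measure (ℕ → S)) [IsProbabilityMeasure μ]
variable (hiid : ∀ (n : ℕ) (A : Fin n → Set S),
      μ {γ | ∀ i : Fin n, γ i ∈ A i} = ∏ i, ν (A i))

include hiid in
lemma measure_cyl (k : ℕ) (w : Fin k → S) :
    μ (res k ⁻¹' {w}) = ∏ i, ν {w i} := by
  rw [← hiid k (fun i => {w i})]
  congr 1
  ext γ
  simp [res, Set.mem_preimage, funext_iff]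

lemma comp_res_eq_sum (k : ℕ) (G : (Fin k → S) → ℝ) (γ : ℕ → S) :
    G (res k γ) = ∑ w : Fin k → S, (res k ⁻¹' {w}).indicator (fun _ => G w) γ := by
  classical
  rw [Finset.sum_eq_single (res k γ)]
  · simp [Set.indicator_apply, Set.mem_preimage]
  · intro w _ hw
    simp only [Set.indicator_apply, Set.mem_preimage, Set.mem_singleton_iff]
    rw [if_neg fun hc => hw hc.symm]
  · intro hmem; exact absurd (Finset.mem_univ _) hmem

lemma integrable_comp_res (k : ℕ) (G : (Fin k → S) → ℝ) :
    Integrable (fun γ => G (res k γ)) μ := by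
  have : (fun γ => G (res k γ))
      = fun γ => ∑ w : Fin k → S, (res k ⁻¹' {w}).indicator (fun _ => G w) γ := by
    funext γ; exact comp_res_eq_sum k G γ
  rw [this]
  exact integrable_finset_sum _ fun w _ =>
    (integrable_const (G w)).indicator ((measurable_res k) (measurableSet_singleton w))

include hiid in
lemma integral_comp_res (k : ℕ) (G : (Fin k → S) → ℝ) :
    ∫ γ, G (res k γ) ∂μ = ∑ w : Fin k → S, pw ν w * G w := by
  have : (fun γ => G (res k γ))
      = fun γ => ∑ w : Fin k → S, (res k ⁻¹' {w}).indicator (fun _ => G w) γ := by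
    funext γ; exact comp_res_eq_sum k G γ
  rw [this, integral_finset_sum _ (fun w _ =>
    (integrable_const (G w)).indicator ((measurable_res k) (measurableSet_singleton w)))]
  refine Finset.sum_congr rfl fun w _ => ?_
  rw [integral_indicator_const _ ((measurable_res k) (measurableSet_singleton w)),
    measureReal_def, measure_cyl ν μ hiid, smul_eq_mul, pw, ENNReal.toReal_prod]

/-- the splitting equivalence -/
def splitE (k l : ℕ) : ((Fin k → S) × (Fin l → S)) ≃ (Fin (k + l) → S) :=
  (Equiv.sumArrowEquivProdArrow _ _ _).symm.trans
    (Equiv.arrowCongr finSumFinEquiv (Equiv.refl S))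

lemma splitE_apply (k l : ℕ) (u : Fin k → S) (v : Fin l → S) (j : Fin (k + l)) :
    splitE k l (u, v) j = Sum.elim u v (finSumFinEquiv.symm j) := rfl

lemma splitE_castAdd (k l : ℕ) (u : Fin k → S) (v : Fin l → S) (i : Fin k) :
    splitE k l (u, v) (Fin.castAdd l i) = u i := by
  rw [splitE_apply, ← finSumFinEquiv_apply_left, Equiv.symm_apply_apply]; rfl

lemma splitE_natAdd (k l : ℕ) (u : Fin k → S) (v : Fin l → S) (i : Fin l) :
    splitE k l (u, v) (Fin.natAdd k i) = v i := by
  rw [splitE_apply, ← finSumFinEquiv_apply_right, Equiv.symm_apply_apply]; rfl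

lemma pw_splitE (k l : ℕ) (u : Fin k → S) (v : Fin l → S) :
    pw ν (splitE k l (u, v)) = pw ν u * pw ν v := by
  unfold pw
  calc (∏ j : Fin (k + l), (ν {splitE k l (u, v) j}).toReal)
      = ∏ s : Fin k ⊕ Fin l, (ν {splitE k l (u, v) (finSumFinEquiv s)}).toReal :=
        (Equiv.prod_comp finSumFinEquiv
          (fun j => (ν {splitE k l (u, v) j}).toReal)).symm
    _ = (∏ i : Fin k, (ν {splitE k l (u, v) (finSumFinEquiv (Sum.inl i))}).toReal) *
          ∏ i : Fin l, (ν {splitE k l (u, v) (finSumFinEquiv (Sum.inr i))}).toReal :=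
        Fintype.prod_sum_type _
    _ = (∏ i : Fin k, (ν {u i}).toReal) * ∏ i : Fin l, (ν {v i}).toReal := by
        congr 1
        · exact Finset.prod_congr rfl fun i _ => by
            rw [finSumFinEquiv_apply_left, splitE_castAdd]
        · exact Finset.prod_congr rfl fun i _ => by
            rw [finSumFinEquiv_apply_right, splitE_natAdd]

include hiid in
lemma integral_split (k l : ℕ) (G₁ G₂ : (ℕ → S) → ℝ)
    (h₁ : ∀ γ γ' : ℕ → S, (∀ i < k, γ i = γ' i) → G₁ γ = G₁ γ')
    (h₂ : ∀ γ γ' : ℕ → S, (∀ i < l, γ i = γ' i) → G₂ γ = G₂ γ') :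
    ∫ γ, G₁ γ * G₂ (fun i => γ (k + i)) ∂μ = (∫ γ, G₁ γ ∂μ) * ∫ γ, G₂ γ ∂μ := by
  set g₁ : (Fin k → S) → ℝ := fun u => G₁ (ext k u) with hg₁
  set g₂ : (Fin l → S) → ℝ := fun v => G₂ (ext l v) with hg₂
  have e₁ : ∀ γ : ℕ → S, G₁ γ = g₁ (res k γ) :=
    fun γ => h₁ γ _ fun i hi => (ext_res k γ hi).symm
  have e₂ : ∀ γ : ℕ → S, G₂ γ = g₂ (res l γ) :=
    fun γ => h₂ γ _ fun i hi => (ext_res l γ hi).symm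
  set H : (Fin (k + l) → S) → ℝ :=
    fun w => g₁ (fun i => w (Fin.castAdd l i)) * g₂ (fun i => w (Fin.natAdd k i)) with hH
  have key : ∀ γ : ℕ → S, G₁ γ * G₂ (fun i => γ (k + i)) = H (res (k + l) γ) := by
    intro γ
    have c1 : (fun i : Fin k => res (k + l) γ (Fin.castAdd l i)) = res k γ := by
      funext i; simp [res]
    have c2 : (fun i : Fin l => res (k + l) γ (Fin.natAdd k i)) = res l (fun i => γ (k + i)) := by
      funext i; simp [res]
    rw [hH]; dsimp only; rw [c1, c2, ← e₁, ← e₂ (fun i => γ (k + i))]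
  calc ∫ γ, G₁ γ * G₂ (fun i => γ (k + i)) ∂μ
      = ∫ γ, H (res (k + l) γ) ∂μ := by
        refine integral_congr_ae (Eventually.of_forall fun γ => key γ)
    _ = ∑ w : Fin (k + l) → S, pw ν w * H w := integral_comp_res ν μ hiid _ _
    _ = ∑ p : (Fin k → S) × (Fin l → S), pw ν (splitE k l p) * H (splitE k l p) := by
        rw [Equiv.sum_comp (splitE k l) (fun w => pw ν w * H w)]
    _ = (∑ u : Fin k → S, pw ν u * g₁ u) * ∑ v : Fin l → S, pw ν v * g₂ v := by
        rw [Fintype.sum_prod_type, Finset.sum_mul_sum]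
        refine Finset.sum_congr rfl fun u _ => Finset.sum_congr rfl fun v _ => ?_
        rw [pw_splitE, hH]; dsimp only
        have c1 : (fun i : Fin k => splitE k l (u, v) (Fin.castAdd l i)) = u := by
          funext i; exact splitE_castAdd k l u v i
        have c2 : (fun i : Fin l => splitE k l (u, v) (Fin.natAdd k i)) = v := by
          funext i; exact splitE_natAdd k l u v i
        rw [c1, c2]; ring
    _ = (∫ γ, G₁ γ ∂μ) * ∫ γ, G₂ γ ∂μ := by
        rw [show (∫ γ, G₁ γ ∂μ) = ∫ γ, g₁ (res k γ) ∂μ from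
            integral_congr_ae (Eventually.of_forall e₁),
          show (∫ γ, G₂ γ ∂μ) = ∫ γ, g₂ (res l γ) ∂μ from
            integral_congr_ae (Eventually.of_forall e₂),
          integral_comp_res ν μ hiid, integral_comp_res ν μ hiid]

include hiid in
lemma integral_prod_blocks (m : ℕ) (g : (ℕ → S) → ℝ)
    (hg : ∀ γ γ' : ℕ → S, (∀ i < m, γ i = γ' i) → g γ = g γ') (j : ℕ) :
    ∫ γ, ∏ i ∈ Finset.range j, g (fun l => γ (i * m + l)) ∂μ = (∫ γ, g γ ∂μ) ^ j := by
  induction j with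
  | zero => simp
  | succ j ih =>
      set G₂ : (ℕ → S) → ℝ := fun δ => ∏ i ∈ Finset.range j, g (fun l => δ (i * m + l)) with hG₂
      have key : ∀ γ : ℕ → S,
          (∏ i ∈ Finset.range (j + 1), g (fun l => γ (i * m + l)))
            = g γ * G₂ (fun i' => γ (m + i')) := by
        intro γ
        calc (∏ i ∈ Finset.range (j + 1), g (fun l => γ (i * m + l)))
            = (∏ i ∈ Finset.range j, g (fun l => γ ((i + 1) * m + l))) *
                g (fun l => γ (0 * m + l)) := Finset.prod_range_succ' _ j
          _ = g γ * ∏ i ∈ Finset.range j, g (fun l => γ (m + (i * m + l))) := by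
              rw [mul_comm]
              congr 1
              · exact hg _ _ fun i _ => by norm_num
              · exact Finset.prod_congr rfl fun i _ => congrArg g (by
                  funext l; show γ ((i + 1) * m + l) = γ (m + (i * m + l)); congr 1; ring)
          _ = g γ * G₂ (fun i' => γ (m + i')) := rfl
      have hG₂dep : ∀ γ γ' : ℕ → S, (∀ i < j * m, γ i = γ' i) → G₂ γ = G₂ γ' := by
        intro γ γ' hagree
        refine Finset.prod_congr rfl fun i hi => ?_
        refine hg _ _ fun l hl => hagree _ ?_
        have : i * m + l < i * m + m := Nat.add_lt_add_left hl _
        calc i * m + l < (i + 1) * m := by rw [Nat.succ_mul]; exact this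
          _ ≤ j * m := Nat.mul_le_mul_right m (Finset.mem_range.mp hi)
      calc ∫ γ, ∏ i ∈ Finset.range (j + 1), g (fun l => γ (i * m + l)) ∂μ
          = ∫ γ, g γ * G₂ (fun i => γ (m + i)) ∂μ :=
            integral_congr_ae (Eventually.of_forall fun γ => key γ)
        _ = (∫ γ, g γ ∂μ) * ∫ γ, G₂ γ ∂μ := integral_split ν μ hiid m (j * m) g G₂ hg hG₂dep
        _ = (∫ γ, g γ ∂μ) ^ (j + 1) := by rw [ih]; ring

include hiid in
lemma sum_pw (k : ℕ) : ∑ w : Fin k → S, pw ν w = 1 := by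
  have h := integral_comp_res ν μ hiid k (fun _ => (1 : ℝ))
  simpa using h.symm

include hiid in
lemma chernoff {m : ℕ} (x : (Fin m → S) → ℝ) {L ε : ℝ} (hL : 1 ≤ L)
    (hx : ∀ v, |x v| ≤ L) (hε : 0 < ε) :
    ∀ᵐ γ ∂μ, ∀ᶠ j : ℕ in atTop,
      ∑ i ∈ Finset.range j, x (res m (fun l => γ (i * m + l)))
        < j * ((∑ v : Fin m → S, pw ν v * x v) + ε) := by
  classical
  set a : ℝ := ∑ v : Fin m → S, pw ν v * x v with ha
  have hL0 : (0:ℝ) < L := lt_of_lt_of_le one_pos hL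
  set t : ℝ := min (1 / L) (ε / (2 * L ^ 2)) with ht_def
  have ht0 : 0 < t := lt_min (by positivity) (by positivity)
  have htL : t * L ≤ 1 := by
    have : t ≤ 1 / L := min_le_left _ _
    calc t * L ≤ (1 / L) * L := mul_le_mul_of_nonneg_right this hL0.le
      _ = 1 := by field_simp
  have htL2 : t * L ^ 2 ≤ ε / 2 := by
    have h1 : t ≤ ε / (2 * L ^ 2) := min_le_right _ _
    calc t * L ^ 2 ≤ (ε / (2 * L ^ 2)) * L ^ 2 := mul_le_mul_of_nonneg_right h1 (by positivity)
      _ = ε / 2 := by field_simp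
  set g : (ℕ → S) → ℝ := fun δ => Real.exp (t * x (res m δ)) with hg
  have hgdep : ∀ γ γ' : ℕ → S, (∀ i < m, γ i = γ' i) → g γ = g γ' := by
    intro γ γ' hagree
    have : res (S := S) m γ = res m γ' := funext fun i => hagree i i.isLt
    simp [hg, this]
  have hgpt : ∀ v, Real.exp (t * x v) ≤ 1 + t * x v + t ^ 2 * L ^ 2 := by
    intro v
    have hy : |t * x v| ≤ 1 := by
      rw [abs_mul, abs_of_pos ht0]
      calc t * |x v| ≤ t * L := mul_le_mul_of_nonneg_left (hx v) ht0.le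
        _ ≤ 1 := htL
    have hb := Real.exp_bound hy (by norm_num : 0 < 2)
    have hsum : ∑ i ∈ Finset.range 2, (t * x v) ^ i / (Nat.factorial i)
        = 1 + t * x v := by
      simp [Finset.sum_range_succ]
    rw [hsum] at hb
    norm_num [Nat.factorial] at hb
    have h2 : |t * x v| ^ 2 ≤ t ^ 2 * L ^ 2 := by
      rw [abs_mul, abs_of_pos ht0, mul_pow]
      exact mul_le_mul_of_nonneg_left (by
        have := hx v
        nlinarith [abs_nonneg (x v)]) (by positivity)
    have h3 := (abs_le.mp hb).2
    rw [← abs_mul] at h3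
    nlinarith [h3, h2, sq_abs (t * x v)]
  have hint : ∫ γ, g γ ∂μ = ∑ v : Fin m → S, pw ν v * Real.exp (t * x v) :=
    integral_comp_res ν μ hiid m (fun v => Real.exp (t * x v))
  have hEnonneg : 0 ≤ ∫ γ, g γ ∂μ := by
    rw [hint]
    exact Finset.sum_nonneg fun v _ => mul_nonneg (pw_nonneg ν v) (Real.exp_pos _).le
  have hE : ∫ γ, g γ ∂μ ≤ Real.exp (t * (a + ε / 2)) := by
    rw [hint]
    have step1 : ∑ v : Fin m → S, pw ν v * Real.exp (t * x v)
        ≤ ∑ v : Fin m → S, pw ν v * (1 + t * x v + t ^ 2 * L ^ 2) :=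
      Finset.sum_le_sum fun v _ => mul_le_mul_of_nonneg_left (hgpt v) (pw_nonneg ν v)
    have step2 : ∑ v : Fin m → S, pw ν v * (1 + t * x v + t ^ 2 * L ^ 2)
        = 1 + (t * a + t ^ 2 * L ^ 2) := by
      have e1 : ∑ v : Fin m → S, pw ν v * (t * x v) = t * a := by
        rw [ha, Finset.mul_sum]
        exact Finset.sum_congr rfl fun v _ => by ring
      have e2 : ∑ v : Fin m → S, pw ν v * (t ^ 2 * L ^ 2) = t ^ 2 * L ^ 2 := by
        rw [← Finset.sum_mul, sum_pw ν μ hiid, one_mul]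
      simp only [mul_add, mul_one, Finset.sum_add_distrib]
      rw [sum_pw ν μ hiid, e1, e2]; ring
    have step3 : 1 + (t * a + t ^ 2 * L ^ 2) ≤ Real.exp (t * a + t ^ 2 * L ^ 2) := by
      linarith [Real.add_one_le_exp (t * a + t ^ 2 * L ^ 2)]
    have step4 : Real.exp (t * a + t ^ 2 * L ^ 2) ≤ Real.exp (t * (a + ε / 2)) := by
      apply Real.exp_le_exp.2
      have : t ^ 2 * L ^ 2 ≤ t * (ε / 2) := by
        calc t ^ 2 * L ^ 2 = t * (t * L ^ 2) := by ring
          _ ≤ t * (ε / 2) := mul_le_mul_of_nonneg_left htL2 ht0.le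
      linarith
    linarith
  set A : ℕ → Set (ℕ → S) := fun j =>
    {γ | (j : ℝ) * (a + ε) ≤ ∑ i ∈ Finset.range j, x (res m (fun l => γ (i * m + l)))} with hA
  have hxm : ∀ i : ℕ, Measurable fun γ : ℕ → S => x (res m (fun l => γ (i * m + l))) := by
    intro i
    exact (measurable_of_countable x).comp
      (measurable_pi_lambda _ fun l => measurable_pi_apply _)
  have hmeasA : ∀ j, MeasurableSet (A j) := by
    intro j
    exact measurableSet_le measurable_const (Finset.measurable_sum _ fun i _ => hxm i)
  have hgm : ∀ i : ℕ, Measurable fun γ : ℕ → S => g (fun l => γ (i * m + l)) := by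
    intro i
    exact Real.measurable_exp.comp ((hxm i).const_mul t)
  have hintg : ∀ j, Integrable (fun γ => ∏ i ∈ Finset.range j, g (fun l => γ (i * m + l))) μ := by
    intro j
    refine Integrable.mono' (integrable_const (Real.exp (t * L) ^ j))
      (Finset.measurable_prod _ fun i _ => hgm i).aestronglyMeasurable
      (Eventually.of_forall fun γ => ?_)
    have hpos : 0 < ∏ i ∈ Finset.range j, g (fun l => γ (i * m + l)) :=
      Finset.prod_pos fun i _ => Real.exp_pos _
    rw [Real.norm_eq_abs, abs_of_pos hpos]
    calc ∏ i ∈ Finset.range j, g (fun l => γ (i * m + l))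
        ≤ ∏ _i ∈ Finset.range j, Real.exp (t * L) := by
          refine Finset.prod_le_prod (fun i _ => (Real.exp_pos _).le) (fun i _ => ?_)
          apply Real.exp_le_exp.2
          have h1 : x (res m fun l => γ (i * m + l)) ≤ L :=
            le_trans (le_abs_self _) (hx _)
          exact mul_le_mul_of_nonneg_left h1 ht0.le
      _ = Real.exp (t * L) ^ j := by simp
  have hbound : ∀ j : ℕ, (μ (A j)).toReal ≤ Real.exp (-(t * (ε / 2)) * j) := by
    intro j
    set c : ℝ := (j : ℝ) * (a + ε) with hc
    have hind : ∀ γ, (A j).indicator (fun _ => (1 : ℝ)) γ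
        ≤ Real.exp (-(t * c)) * ∏ i ∈ Finset.range j, g (fun l => γ (i * m + l)) := by
      intro γ
      have hprod : Real.exp (-(t * c)) * ∏ i ∈ Finset.range j, g (fun l => γ (i * m + l))
          = Real.exp (t * ((∑ i ∈ Finset.range j, x (res m (fun l => γ (i * m + l)))) - c)) := by
        rw [hg]
        rw [← Real.exp_sum, ← Real.exp_add]
        congr 1
        rw [mul_sub, Finset.mul_sum]
        ring
      rw [hprod]
      by_cases hγ : γ ∈ A j
      · rw [Set.indicator_of_mem hγ]
        apply Real.one_le_exp
        have hge : c ≤ ∑ i ∈ Finset.range j, x (res m (fun l => γ (i * m + l))) := hγ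
        have : 0 ≤ (∑ i ∈ Finset.range j, x (res m (fun l => γ (i * m + l)))) - c := by linarith
        exact mul_nonneg ht0.le this
      · rw [Set.indicator_of_notMem hγ]
        exact (Real.exp_pos _).le
    have hint2 : ∫ γ, (A j).indicator (fun _ => (1 : ℝ)) γ ∂μ = (μ (A j)).toReal := by
      rw [integral_indicator_const _ (hmeasA j)]; simp [measureReal_def]
    have hle : (μ (A j)).toReal ≤ Real.exp (-(t * c)) * (∫ γ, g γ ∂μ) ^ j := by
      rw [← hint2]
      calc ∫ γ, (A j).indicator (fun _ => (1 : ℝ)) γ ∂μ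
          ≤ ∫ γ, Real.exp (-(t * c)) * ∏ i ∈ Finset.range j, g (fun l => γ (i * m + l)) ∂μ :=
            integral_mono ((integrable_const (1:ℝ)).indicator (hmeasA j))
              ((hintg j).const_mul _) hind
        _ = Real.exp (-(t * c)) * (∫ γ, g γ ∂μ) ^ j := by
            rw [integral_const_mul, integral_prod_blocks ν μ hiid m g hgdep j]
    calc (μ (A j)).toReal ≤ Real.exp (-(t * c)) * (∫ γ, g γ ∂μ) ^ j := hle
      _ ≤ Real.exp (-(t * c)) * Real.exp (t * (a + ε / 2)) ^ j := by
          apply mul_le_mul_of_nonneg_left _ (Real.exp_pos _).le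
          exact pow_le_pow_left₀ hEnonneg hE j
      _ = Real.exp (-(t * c) + (j : ℝ) * (t * (a + ε / 2))) := by
          rw [Real.exp_add, Real.exp_nat_mul]
      _ = Real.exp (-(t * (ε / 2)) * j) := by
          congr 1
          rw [hc]; ring
  have hμA : ∀ j : ℕ, μ (A j) ≤ ENNReal.ofReal (Real.exp (-(t * (ε / 2))) ^ j) := by
    intro j
    rw [← ENNReal.ofReal_toReal (measure_ne_top μ (A j))]
    apply ENNReal.ofReal_le_ofReal
    rw [← Real.exp_nat_mul]
    exact le_trans (hbound j) (Real.exp_le_exp.2 (le_of_eq (by ring)))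
  have hr0 : (0:ℝ) ≤ Real.exp (-(t * (ε / 2))) := (Real.exp_pos _).le
  have hr1 : Real.exp (-(t * (ε / 2))) < 1 := by
    have : Real.exp (-(t * (ε / 2))) < Real.exp 0 := Real.exp_lt_exp.2 (by nlinarith)
    simpa using this
  have hgeo : ∑' j : ℕ, ENNReal.ofReal (Real.exp (-(t * (ε / 2))) ^ j)
      = ENNReal.ofReal (∑' j : ℕ, Real.exp (-(t * (ε / 2))) ^ j) :=
    (ENNReal.ofReal_tsum_of_nonneg (fun j => pow_nonneg hr0 j)
      (summable_geometric_of_lt_one hr0 hr1)).symm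
  have hsum : ∑' j : ℕ, μ (A j) ≠ ⊤ :=
    ne_top_of_le_ne_top ENNReal.ofReal_ne_top
      ((ENNReal.tsum_le_tsum hμA).trans_eq hgeo)
  filter_upwards [MeasureTheory.ae_eventually_notMem hsum] with γ hγ
  refine hγ.mono fun j hj => ?_
  exact lt_of_not_ge fun hcon => hj hcon

end RndHtAux




set_option linter.unusedSectionVars false in
set_option maxHeartbeats 1000000 in
lemma tendsto_root_aux {K : ℝ} (hK : 1 ≤ K) :
    Filter.Tendsto (fun n : ℕ => (K * ((n : ℝ) + 1)) ^ ((n : ℝ)⁻¹)) Filter.atTop (nhds 1) := by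
  have hK0 : (0:ℝ) < K := lt_of_lt_of_le one_pos hK
  have h1 : Filter.Tendsto (fun n : ℕ => K * ((n : ℝ) + 1)) Filter.atTop Filter.atTop :=
    (Filter.tendsto_atTop_add_const_right _ 1 tendsto_natCast_atTop_atTop).const_mul_atTop hK0
  have h2 : Filter.Tendsto (fun x : ℝ => Real.log x / x) Filter.atTop (nhds 0) :=
    Real.isLittleO_log_id_atTop.tendsto_div_nhds_zero
  have h3 := h2.comp h1
  have h4 : Filter.Tendsto (fun n : ℕ => (K * ((n : ℝ) + 1)) / n) Filter.atTop (nhds K) := by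
    have h5 : Filter.Tendsto (fun n : ℕ => K + K / n) Filter.atTop (nhds (K + 0)) :=
      tendsto_const_nhds.add (tendsto_const_div_atTop_nhds_zero_nat K)
    rw [add_zero] at h5
    refine h5.congr' ?_
    filter_upwards [Filter.eventually_ge_atTop 1] with n hn
    have hn0 : ((n : ℝ)) ≠ 0 := by positivity
    field_simp
  have h6 : Filter.Tendsto (fun n : ℕ => (n : ℝ)⁻¹ * Real.log (K * ((n : ℝ) + 1)))
      Filter.atTop (nhds 0) := by
    have h7 := h3.mul h4
    rw [zero_mul] at h7
    refine h7.congr' ?_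
    filter_upwards [Filter.eventually_ge_atTop 1] with n hn
    have hn0 : ((n : ℝ)) ≠ 0 := by positivity
    have hX : K * ((n : ℝ) + 1) ≠ 0 := by positivity
    show Real.log (K * ((n : ℝ) + 1)) / (K * ((n : ℝ) + 1)) * ((K * ((n : ℝ) + 1)) / n) = _
    field_simp
  have h8 : Filter.Tendsto (fun n : ℕ => Real.exp ((n : ℝ)⁻¹ * Real.log (K * ((n : ℝ) + 1))))
      Filter.atTop (nhds 1) := by
    have := (Real.continuous_exp.continuousAt (x := 0)).tendsto.comp h6
    simpa [Function.comp_def] using this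
  refine h8.congr fun n => ?_
  rw [Real.rpow_def_of_pos (by positivity), mul_comm]


set_option maxHeartbeats 2000000 in
theorem height_growth_bounded_by_dynamical_degree
    {S Pt M : Type*} [Monoid M] [MulAction M Pt] [Fintype S]
    [MeasurableSpace S] [DiscreteMeasurableSpace S]
    -- the finite set `S` of dominant rational self-maps of `ℙ^N(ℚ̄)`:
    (F : S → M) (deg : M → ℕ) (indet : M → Set Pt) (h : Pt → ℝ)
    (hdominant : ∀ f : M, 1 ≤ deg f)
    (hdeg_id : deg 1 = 1)
    (hdeg_comp : ∀ f g : M, deg (f * g) ≤ deg f * deg g)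
    (hheight_nonneg : ∀ Q : Pt, 0 ≤ h Q)
    (hheight_bound : ∀ f : M, ∃ C : ℝ, ∀ Q : Pt, Q ∉ indet f →
      h (f • Q) ≤ (deg f : ℝ) * h Q + C)
    (hindet_comp : ∀ f g : M, indet (f * g) ⊆ indet g ∪ {Q | g • Q ∈ indet f})
    -- `S` is degree independent:
    (hdegind : ∀ (γ : ℕ → S) (n : ℕ), 1 ≤ n → 2 ≤ deg (seqComp F γ n))
    -- `ν` is a probability measure on `S`:
    (ν : Measure S) [IsProbabilityMeasure ν]
    -- `μ = ν̄` is the i.i.d. product measure on `Φ_S = ∏_{i=1}^∞ S`: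
    (μ : Measure (ℕ → S)) [IsProbabilityMeasure μ]
    (hiid : ∀ (n : ℕ) (A : Fin n → Set S),
      μ {γ | ∀ i : Fin n, γ i ∈ A i} = ∏ i, ν (A i))
    -- `P ∈ ℙ^N(ℚ̄)_S`: every orbit of `P` avoids `I_S = ⋃_{φ ∈ S} I_φ`:
    (P : Pt)
    (hP : ∀ (γ : ℕ → S) (n : ℕ) (s : S), seqComp F γ n • P ∉ indet (F s)) :
    -- a.e. `limsup_n h(γ_n(P))^{1/n} ≤ δ_{S,ν} = exp(inf_{n≥1} E_n[log deg γ_n]/n)`: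
    ∀ᵐ γ ∂μ,
      limsup (fun n : ℕ => h (seqComp F γ n • P) ^ ((n : ℝ)⁻¹)) atTop ≤
        Real.exp (⨅ n : {n : ℕ // 1 ≤ n},
          (∫ γ', Real.log (deg (seqComp F γ' (n : ℕ))) ∂μ) / ((n : ℕ) : ℝ)) := by
  classical
  -- `S` is nonempty since `μ` is a probability measure on `ℕ → S`
  haveI hSnely : Nonempty S := by
    by_contra hne
    rw [not_nonempty_iff] at hne
    haveI : IsEmpty (ℕ → S) := ⟨fun f => IsEmpty.false (f 0)⟩
    have h1 : μ Set.univ = 1 := measure_univ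
    rw [Set.univ_eq_empty_iff.mpr inferInstance, measure_empty] at h1
    exact zero_ne_one h1
  -- height constants
  set Cfun : M → ℝ := fun f => Classical.choose (hheight_bound f) with hCfun_def
  have hCfun : ∀ f (Q : Pt), Q ∉ indet f → h (f • Q) ≤ (deg f : ℝ) * h Q + Cfun f :=
    fun f => Classical.choose_spec (hheight_bound f)
  set D : ℕ := 2 + Finset.univ.sup (fun s : S => deg (F s)) with hD_def
  have hD2 : 2 ≤ D := Nat.le_add_right 2 _
  have hDs : ∀ s, deg (F s) ≤ D := by
    intro s
    rw [hD_def]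
    exact le_trans (Finset.le_sup (f := fun s => deg (F s)) (Finset.mem_univ s)) (Nat.le_add_left _ 2)
  have hD1R : (1 : ℝ) ≤ (D : ℝ) := by exact_mod_cast le_trans one_le_two hD2
  -- orbit points avoid indeterminacy loci of words
  have L3 : ∀ (k : ℕ) (δ γ' : ℕ → S) (n : ℕ),
      seqComp F γ' n • P ∉ indet (seqComp F δ (k + 1)) := by
    intro k
    induction k with
    | zero =>
        intro δ γ' n hc
        have h1 : seqComp F δ 1 = F (δ 0) := by
          show F (δ 0) * seqComp F δ 0 = F (δ 0)
          rw [show seqComp F δ 0 = 1 from rfl, mul_one]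
        rw [h1] at hc
        exact hP γ' n (δ 0) hc
    | succ k ih =>
        intro δ γ' n hc
        have h1 : seqComp F δ (k + 2) = F (δ (k + 1)) * seqComp F δ (k + 1) := rfl
        rw [h1] at hc
        rcases hindet_comp (F (δ (k + 1))) (seqComp F δ (k + 1)) hc with hc1 | hc2
        · exact ih δ γ' n hc1
        · set cat : ℕ → S := fun i => if hi : i < n then γ' i else δ (i - n) with hcat
          have e1 : seqComp F cat (n + (k + 1)) = seqComp F δ (k + 1) * seqComp F γ' n := by
            rw [SeqCompAux.seqComp_shift F cat n (k + 1)]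
            congr 1
            · apply SeqCompAux.seqComp_congr
              intro i hi
              show cat (n + i) = δ i
              rw [hcat]
              dsimp only
              rw [dif_neg (by omega)]
              congr 1
              omega
            · apply SeqCompAux.seqComp_congr
              intro i hi
              show cat i = γ' i
              rw [hcat]
              dsimp only
              rw [dif_pos hi]
          exact hP cat (n + (k + 1)) (δ (k + 1)) (by rw [e1, mul_smul]; exact hc2)
  -- single-step height bound
  have hSne : (Finset.univ : Finset S).Nonempty := Finset.univ_nonempty
  set C1 : ℝ := max 0 (Finset.univ.sup' hSne fun s => Cfun (F s)) with hC1_def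
  have hC1nonneg : 0 ≤ C1 := le_max_left _ _
  have hC1s : ∀ s, Cfun (F s) ≤ C1 :=
    fun s => le_trans (Finset.le_sup' (fun s => Cfun (F s)) (Finset.mem_univ s)) (le_max_right _ _)
  have step1 : ∀ (γ : ℕ → S) (n : ℕ),
      h (seqComp F γ (n + 1) • P) ≤ (D : ℝ) * h (seqComp F γ n • P) + C1 := by
    intro γ n
    have e : seqComp F γ (n + 1) • P = F (γ n) • (seqComp F γ n • P) := by
      rw [show seqComp F γ (n + 1) = F (γ n) * seqComp F γ n from rfl, mul_smul]
    rw [e]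
    have hcast : (deg (F (γ n)) : ℝ) ≤ (D : ℝ) := Nat.cast_le.2 (hDs _)
    have hnn := hheight_nonneg (seqComp F γ n • P)
    calc h (F (γ n) • (seqComp F γ n • P))
        ≤ (deg (F (γ n)) : ℝ) * h (seqComp F γ n • P) + Cfun (F (γ n)) :=
          hCfun _ _ (hP γ n (γ n))
      _ ≤ (D : ℝ) * h (seqComp F γ n • P) + C1 :=
          add_le_add (mul_le_mul_of_nonneg_right hcast hnn) (hC1s (γ n))
  -- iterated single-step bound
  have step2 : ∀ (γ : ℕ → S) (n r : ℕ),
      h (seqComp F γ (n + r) • P)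
        ≤ (D : ℝ) ^ r * h (seqComp F γ n • P) + C1 * r * (D : ℝ) ^ r := by
    intro γ n r
    induction r with
    | zero => simp
    | succ r ih =>
        have hD0 : (0 : ℝ) ≤ (D : ℝ) := le_trans zero_le_one hD1R
        have hpow1 : (1 : ℝ) ≤ (D : ℝ) ^ (r + 1) := one_le_pow₀ hD1R
        have hkey : 0 ≤ C1 * ((D : ℝ) ^ (r + 1) - 1) :=
          mul_nonneg hC1nonneg (by linarith)
        calc h (seqComp F γ (n + (r + 1)) • P)
            ≤ (D : ℝ) * h (seqComp F γ (n + r) • P) + C1 := step1 γ (n + r)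
          _ ≤ (D : ℝ) * ((D : ℝ) ^ r * h (seqComp F γ n • P) + C1 * r * (D : ℝ) ^ r) + C1 :=
              add_le_add_left (mul_le_mul_of_nonneg_left ih hD0) _
          _ ≤ (D : ℝ) ^ (r + 1) * h (seqComp F γ n • P) + C1 * ((r : ℝ) + 1) * (D : ℝ) ^ (r + 1) := by
              rw [pow_succ]
              nlinarith [hkey, pow_succ (D : ℝ) r]
          _ = (D : ℝ) ^ (r + 1) * h (seqComp F γ n • P) + C1 * ((r + 1 : ℕ) : ℝ) * (D : ℝ) ^ (r + 1) := by
              push_cast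
              ring
  -- the word functions and their expectations
  set xm : ∀ m : ℕ, (Fin m → S) → ℝ :=
    fun m v => Real.log (deg (seqComp F (RndHtAux.ext m v) m)) with hxm_def
  have hblockm : ∀ (m : ℕ) (δ : ℕ → S),
      Real.log (deg (seqComp F δ m)) = xm m (RndHtAux.res m δ) := by
    intro m δ
    rw [hxm_def]
    dsimp only
    rw [SeqCompAux.seqComp_congr F m fun i hi => (RndHtAux.ext_res m δ hi).symm]
  have hxm_nonneg : ∀ (m : ℕ) (v : Fin m → S), 0 ≤ xm m v := by
    intro m v
    exact Real.log_nonneg (by exact_mod_cast hdominant _)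
  have hxmL : ∀ (m : ℕ) (v : Fin m → S), |xm m v| ≤ max 1 ((m : ℝ) * Real.log D) := by
    intro m v
    rw [abs_of_nonneg (hxm_nonneg m v)]
    have hdegle : deg (seqComp F (RndHtAux.ext m v) m) ≤ D ^ m :=
      SeqCompAux.deg_seqComp_le F deg hdeg_id hdeg_comp D hDs _ m
    have h1 : xm m v ≤ Real.log ((D : ℝ) ^ m) := by
      rw [hxm_def]
      apply Real.log_le_log (by exact_mod_cast hdominant _)
      exact_mod_cast hdegle
    rw [Real.log_pow] at h1
    exact le_trans h1 (le_max_right _ _)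
  set am : ℕ → ℝ := fun m => ∑ v : Fin m → S, RndHtAux.pw ν v * xm m v with ham_def
  set I : ℕ → ℝ := fun n => ∫ γ', Real.log (deg (seqComp F γ' n)) ∂μ with hI_def
  have hIm : ∀ m : ℕ, I m = am m := by
    intro m
    rw [hI_def, ham_def]
    dsimp only
    calc ∫ γ', Real.log (deg (seqComp F γ' m)) ∂μ
        = ∫ γ', xm m (RndHtAux.res m γ') ∂μ :=
          integral_congr_ae (Filter.Eventually.of_forall fun γ' => hblockm m γ')
      _ = ∑ v : Fin m → S, RndHtAux.pw ν v * xm m v :=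
          RndHtAux.integral_comp_res ν μ hiid m (xm m)
  have ham_nonneg : ∀ m : ℕ, 0 ≤ am m := by
    intro m
    exact Finset.sum_nonneg fun v _ =>
      mul_nonneg (RndHtAux.pw_nonneg ν v) (hxm_nonneg m v)
  -- the almost-sure event
  have hAE : ∀ᵐ γ ∂μ, ∀ (m q : ℕ), ∀ᶠ j : ℕ in atTop,
      ∑ i ∈ Finset.range j, xm m (RndHtAux.res m (fun l => γ (i * m + l)))
        < j * (am m + 1 / ((q : ℝ) + 1)) := by
    rw [MeasureTheory.ae_all_iff]
    intro m
    rw [MeasureTheory.ae_all_iff]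
    intro q
    exact RndHtAux.chernoff ν μ hiid (xm m) (le_max_left _ _) (hxmL m) (by positivity)
  filter_upwards [hAE] with γ hγ
  -- the deterministic conclusion from the eventual block bound
  have key : ∀ (m : ℕ), 1 ≤ m → ∀ (ε : ℝ), 0 < ε →
      (∀ᶠ j : ℕ in atTop,
        ∑ i ∈ Finset.range j, xm m (RndHtAux.res m (fun l => γ (i * m + l)))
          < j * (am m + ε)) →
      limsup (fun n : ℕ => h (seqComp F γ n • P) ^ ((n : ℝ)⁻¹)) atTop
        ≤ Real.exp ((am m + ε) / m) := by
    intro m hm ε hε hev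
    have hm0 : 0 < m := hm
    have hmR : (0 : ℝ) < (m : ℝ) := by exact_mod_cast hm0
    have hTne : (Finset.univ : Finset (Fin m → S)).Nonempty := Finset.univ_nonempty
    set Cm : ℝ := max 0 (Finset.univ.sup' hTne fun v : Fin m → S =>
      Cfun (seqComp F (RndHtAux.ext m v) m)) with hCm_def
    have hCm0 : 0 ≤ Cm := le_max_left _ _
    set B : ℕ → ℝ := fun i => (deg (seqComp F (fun l => γ (i * m + l)) m) : ℝ) with hB_def
    have hB1 : ∀ i, 1 ≤ B i := by
      intro i
      show (1 : ℝ) ≤ (deg (seqComp F (fun l => γ (i * m + l)) m) : ℝ)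
      exact_mod_cast hdominant _
    have hBlog : ∀ i, Real.log (B i) = xm m (RndHtAux.res m (fun l => γ (i * m + l))) :=
      fun i => hblockm m _
    have hprodge1 : ∀ j : ℕ, (1 : ℝ) ≤ ∏ i ∈ Finset.range j, B i := by
      intro j
      calc (1 : ℝ) = ∏ _i ∈ Finset.range j, (1 : ℝ) := by simp
        _ ≤ ∏ i ∈ Finset.range j, B i :=
          Finset.prod_le_prod (fun i _ => zero_le_one) (fun i _ => hB1 i)
    -- block height step
    have hstep : ∀ j : ℕ,
        h (seqComp F γ ((j + 1) * m) • P) ≤ B j * h (seqComp F γ (j * m) • P) + Cm := by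
      intro j
      have e2 : (j + 1) * m = j * m + m := by ring
      have e1 : seqComp F γ (j * m + m)
          = seqComp F (fun l => γ (j * m + l)) m * seqComp F γ (j * m) :=
        SeqCompAux.seqComp_shift F γ (j * m) m
      obtain ⟨k, hk⟩ : ∃ k, m = k + 1 := ⟨m - 1, (Nat.succ_pred_eq_of_pos hm0).symm⟩
      have hni : seqComp F γ (j * m) • P ∉ indet (seqComp F (fun l => γ (j * m + l)) m) := by
        rw [hk]
        exact L3 k _ γ _
      have hCmle : Cfun (seqComp F (fun l => γ (j * m + l)) m) ≤ Cm := by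
        rw [SeqCompAux.seqComp_congr F m
          (fun i hi => (RndHtAux.ext_res m (fun l => γ (j * m + l)) hi).symm)]
        exact le_trans (Finset.le_sup' (fun v => Cfun (seqComp F (RndHtAux.ext m v) m))
          (Finset.mem_univ _)) (le_max_right _ _)
      rw [e2, e1, mul_smul]
      exact le_trans (hCfun _ _ hni) (add_le_add_right hCmle _)
    -- product bound along blocks
    have hprodB : ∀ j : ℕ, h (seqComp F γ (j * m) • P)
        ≤ (∏ i ∈ Finset.range j, B i) * (h P + Cm * j) := by
      intro j
      induction j with
      | zero => simp [show (0 : ℕ) * m = 0 from Nat.zero_mul m,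
          show seqComp F γ 0 = 1 from rfl]
      | succ j ih =>
          have hprod1 := hprodge1 j
          have hhp := hheight_nonneg P
          have hBj := hB1 j
          have hk1 : (1 : ℝ) ≤ (∏ i ∈ Finset.range j, B i) * B j :=
            le_trans (le_of_eq (one_mul 1).symm)
              (mul_le_mul hprod1 hBj zero_le_one (le_trans zero_le_one hprod1))
          have hk2 : 0 ≤ Cm * ((∏ i ∈ Finset.range j, B i) * B j - 1) :=
            mul_nonneg hCm0 (by linarith)
          calc h (seqComp F γ ((j + 1) * m) • P)
              ≤ B j * h (seqComp F γ (j * m) • P) + Cm := hstep j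
            _ ≤ B j * ((∏ i ∈ Finset.range j, B i) * (h P + Cm * j)) + Cm :=
                add_le_add_left
                  (mul_le_mul_of_nonneg_left ih (le_trans zero_le_one hBj)) _
            _ ≤ (∏ i ∈ Finset.range (j + 1), B i) * (h P + Cm * ((j : ℝ) + 1)) := by
                rw [Finset.prod_range_succ]
                nlinarith [hk1, hk2, hhp, hCm0]
            _ = (∏ i ∈ Finset.range (j + 1), B i) * (h P + Cm * ((j + 1 : ℕ) : ℝ)) := by
                push_cast
                ring
    -- full orbit bound
    set K0 : ℝ := h P + Cm + C1 * m + 1 with hK0_def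
    have hK01 : 1 ≤ K0 := by
      have := mul_nonneg hC1nonneg hmR.le
      have := hheight_nonneg P
      rw [hK0_def]
      linarith
    set K : ℝ := (D : ℝ) ^ m * K0 with hK_def
    have hDm1 : (1 : ℝ) ≤ (D : ℝ) ^ m := one_le_pow₀ hD1R
    have hK1 : 1 ≤ K := by
      rw [hK_def]
      nlinarith
    have hfull : ∀ n : ℕ, h (seqComp F γ n • P)
        ≤ (∏ i ∈ Finset.range (n / m), B i) * (K * ((n : ℝ) + 1)) := by
      intro n
      set j := n / m with hj_def
      set r := n % m with hr_def
      have hrm : r < m := Nat.mod_lt _ hm0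
      have hn : n = j * m + r := by
        rw [hj_def, hr_def, mul_comm]
        exact (Nat.div_add_mod n m).symm
      have hjn : j ≤ n := Nat.div_le_self n m
      have hD0 : (0 : ℝ) ≤ (D : ℝ) := by linarith
      have hDr : (D : ℝ) ^ r ≤ (D : ℝ) ^ m := pow_le_pow_right₀ hD1R hrm.le
      have hDr0 : (0 : ℝ) ≤ (D : ℝ) ^ r := pow_nonneg hD0 r
      have hDm0 : (0 : ℝ) ≤ (D : ℝ) ^ m := pow_nonneg hD0 m
      have hprod1 := hprodge1 j
      calc h (seqComp F γ n • P) = h (seqComp F γ (j * m + r) • P) := by rw [← hn]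
        _ ≤ (D : ℝ) ^ r * h (seqComp F γ (j * m) • P) + C1 * r * (D : ℝ) ^ r :=
            step2 γ (j * m) r
        _ ≤ (D : ℝ) ^ m * ((∏ i ∈ Finset.range j, B i) * (h P + Cm * j))
              + C1 * m * (D : ℝ) ^ m := by
            refine add_le_add ?_ ?_
            · exact mul_le_mul hDr (hprodB j) (hheight_nonneg _) hDm0
            · have hrm' : (r : ℝ) ≤ (m : ℝ) := by exact_mod_cast hrm.le
              have h9 : C1 * r ≤ C1 * m := mul_le_mul_of_nonneg_left hrm' hC1nonneg
              exact mul_le_mul h9 hDr hDr0 (mul_nonneg hC1nonneg hmR.le)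
        _ ≤ (∏ i ∈ Finset.range j, B i) * (K * ((n : ℝ) + 1)) := by
            have hjn' : (j : ℝ) ≤ (n : ℝ) := by exact_mod_cast hjn
            have hQK : h P + Cm * j + C1 * m ≤ K0 * ((n : ℝ) + 1) := by
              rw [hK0_def]
              nlinarith [hCm0, mul_nonneg hC1nonneg hmR.le, hheight_nonneg P, hjn',
                Nat.cast_nonneg (α := ℝ) n, mul_le_mul_of_nonneg_left hjn' hCm0,
                mul_nonneg (hheight_nonneg P) (Nat.cast_nonneg (α := ℝ) n),
                mul_nonneg (mul_nonneg hC1nonneg hmR.le) (Nat.cast_nonneg (α := ℝ) n)]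
            have hstep' : (D : ℝ) ^ m * ((∏ i ∈ Finset.range j, B i) * (h P + Cm * j))
                + C1 * m * (D : ℝ) ^ m
                ≤ (∏ i ∈ Finset.range j, B i) * ((D : ℝ) ^ m * (h P + Cm * j + C1 * m)) := by
              have h10 : 0 ≤ (∏ i ∈ Finset.range j, B i) - 1 := by linarith
              have h11 : 0 ≤ C1 * m * (D : ℝ) ^ m :=
                mul_nonneg (mul_nonneg hC1nonneg hmR.le) hDm0
              nlinarith [mul_nonneg h10 h11]
            refine le_trans hstep' ?_
            apply mul_le_mul_of_nonneg_left _ (le_trans zero_le_one hprod1)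
            rw [hK_def]
            calc (D : ℝ) ^ m * (h P + Cm * j + C1 * m)
                ≤ (D : ℝ) ^ m * (K0 * ((n : ℝ) + 1)) := mul_le_mul_of_nonneg_left hQK hDm0
              _ = (D : ℝ) ^ m * K0 * ((n : ℝ) + 1) := by ring
    -- eventual bound on block degree products
    set R : ℝ := Real.exp (am m + ε) with hR_def
    have hR1 : 1 ≤ R := Real.one_le_exp (by linarith [ham_nonneg m])
    have hR0 : 0 ≤ R := le_trans zero_le_one hR1
    obtain ⟨J, hJ⟩ := Filter.eventually_atTop.mp hev
    have hprod_ev : ∀ j, J ≤ j → (∏ i ∈ Finset.range j, B i) ≤ R ^ j := by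
      intro j hj
      have hlog : ∏ i ∈ Finset.range j, B i
          = Real.exp (∑ i ∈ Finset.range j,
              xm m (RndHtAux.res m (fun l => γ (i * m + l)))) := by
        rw [Real.exp_sum]
        refine Finset.prod_congr rfl fun i _ => ?_
        rw [← hBlog i, Real.exp_log (lt_of_lt_of_le zero_lt_one (hB1 i))]
      rw [hlog, hR_def, ← Real.exp_nat_mul]
      exact Real.exp_le_exp.2 (le_of_lt (hJ j hj))
    -- pass to `n`-th roots
    set v : ℕ → ℝ := fun n => R ^ ((m : ℝ)⁻¹) * (K * ((n : ℝ) + 1)) ^ ((n : ℝ)⁻¹) with hv_def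
    have hev2 : ∀ᶠ n : ℕ in atTop, h (seqComp F γ n • P) ^ ((n : ℝ)⁻¹) ≤ v n := by
      filter_upwards [Filter.eventually_ge_atTop (m * J), Filter.eventually_ge_atTop 1]
        with n hn1 hn2
      have hnR : (0 : ℝ) < (n : ℝ) := by exact_mod_cast hn2
      have hj : J ≤ n / m := (Nat.le_div_iff_mul_le hm0).mpr
        (le_trans (le_of_eq (Nat.mul_comm J m)) hn1)
      have hKn0 : (0 : ℝ) ≤ K * ((n : ℝ) + 1) := mul_nonneg (by linarith) (by positivity)
      have h2 : h (seqComp F γ n • P) ≤ R ^ (n / m) * (K * ((n : ℝ) + 1)) :=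
        le_trans (hfull n)
          (mul_le_mul_of_nonneg_right (hprod_ev _ hj) hKn0)
      have h3 : h (seqComp F γ n • P) ^ ((n : ℝ)⁻¹)
          ≤ (R ^ (n / m) * (K * ((n : ℝ) + 1))) ^ ((n : ℝ)⁻¹) :=
        Real.rpow_le_rpow (hheight_nonneg _) h2 (by positivity)
      have h4 : (R ^ (n / m) * (K * ((n : ℝ) + 1))) ^ ((n : ℝ)⁻¹)
          = (R ^ (n / m)) ^ ((n : ℝ)⁻¹) * (K * ((n : ℝ) + 1)) ^ ((n : ℝ)⁻¹) :=
        Real.mul_rpow (pow_nonneg hR0 _) hKn0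
      have h5 : ((R : ℝ) ^ (n / m)) ^ ((n : ℝ)⁻¹) ≤ R ^ ((m : ℝ)⁻¹) := by
        rw [← Real.rpow_natCast R (n / m), ← Real.rpow_mul hR0]
        apply Real.rpow_le_rpow_of_exponent_le hR1
        have hcast : ((n / m : ℕ) : ℝ) ≤ (n : ℝ) / (m : ℝ) := Nat.cast_div_le
        calc ((n / m : ℕ) : ℝ) * ((n : ℝ))⁻¹ ≤ ((n : ℝ) / (m : ℝ)) * ((n : ℝ))⁻¹ :=
              mul_le_mul_of_nonneg_right hcast (by positivity)
          _ = (m : ℝ)⁻¹ := by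
              field_simp
      calc h (seqComp F γ n • P) ^ ((n : ℝ)⁻¹)
          ≤ (R ^ (n / m) * (K * ((n : ℝ) + 1))) ^ ((n : ℝ)⁻¹) := h3
        _ = (R ^ (n / m)) ^ ((n : ℝ)⁻¹) * (K * ((n : ℝ) + 1)) ^ ((n : ℝ)⁻¹) := h4
        _ ≤ v n := by
            rw [hv_def]
            exact mul_le_mul_of_nonneg_right h5 (Real.rpow_nonneg hKn0 _)
    have hvlim : Tendsto v atTop (nhds (R ^ ((m : ℝ)⁻¹))) := by
      have h6 := (tendsto_root_aux hK1).const_mul (R ^ ((m : ℝ)⁻¹))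
      rw [mul_one] at h6
      exact h6
    have hLub : limsup (fun n : ℕ => h (seqComp F γ n • P) ^ ((n : ℝ)⁻¹)) atTop
        ≤ R ^ ((m : ℝ)⁻¹) := by
      have hcob : IsCoboundedUnder (· ≤ ·) atTop
          (fun n : ℕ => h (seqComp F γ n • P) ^ ((n : ℝ)⁻¹)) :=
        IsBoundedUnder.isCoboundedUnder_le
          ⟨0, Filter.eventually_atTop.mpr
            ⟨0, fun b _ => Real.rpow_nonneg (hheight_nonneg _) _⟩⟩
      have h7 := Filter.limsup_le_limsup hev2 hcob (hvlim.isBoundedUnder_le)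
      rwa [hvlim.limsup_eq] at h7
    have hfinal : R ^ ((m : ℝ)⁻¹) = Real.exp ((am m + ε) / m) := by
      rw [hR_def, Real.rpow_def_of_pos (Real.exp_pos _), Real.log_exp, ← div_eq_mul_inv]
    rw [← hfinal]
    exact hLub

  -- conclude
  have final : ∀ (m : ℕ), 1 ≤ m →
      limsup (fun n : ℕ => h (seqComp F γ n • P) ^ ((n : ℝ)⁻¹)) atTop
        ≤ Real.exp (I m / m) := by
    intro m hm
    have hq : ∀ q : ℕ,
        limsup (fun n : ℕ => h (seqComp F γ n • P) ^ ((n : ℝ)⁻¹)) atTop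
          ≤ Real.exp ((am m + 1 / ((q : ℝ) + 1)) / m) :=
      fun q => key m hm _ (by positivity) (hγ m q)
    have htq : Tendsto (fun q : ℕ => Real.exp ((am m + 1 / ((q : ℝ) + 1)) / m)) atTop
        (nhds (Real.exp (am m / m))) := by
      refine (Real.continuous_exp.continuousAt.tendsto).comp ?_
      have h0 : Tendsto (fun q : ℕ => 1 / ((q : ℝ) + 1)) atTop (nhds 0) :=
        tendsto_one_div_add_atTop_nhds_zero_nat
      have h2 : Tendsto (fun q : ℕ => (am m + 1 / ((q : ℝ) + 1)) / (m : ℝ)) atTop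
          (nhds ((am m + 0) / (m : ℝ))) :=
        (Tendsto.add tendsto_const_nhds h0).div_const _
      rw [add_zero] at h2
      exact h2
    have := ge_of_tendsto' htq hq
    rwa [hIm m]
  have hInonneg : ∀ n : {n : ℕ // 1 ≤ n}, 0 ≤ I (n : ℕ) / ((n : ℕ) : ℝ) := by
    rintro ⟨n, hn⟩
    have := (hIm n) ▸ (ham_nonneg n)
    positivity
  haveI : Nonempty {n : ℕ // 1 ≤ n} := ⟨⟨1, le_refl 1⟩⟩
  have hiInf : Real.exp (⨅ n : {n : ℕ // 1 ≤ n}, I (n : ℕ) / ((n : ℕ) : ℝ))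
      = ⨅ n : {n : ℕ // 1 ≤ n}, Real.exp (I (n : ℕ) / ((n : ℕ) : ℝ)) := by
    refine Monotone.map_ciInf_of_continuousAt Real.continuous_exp.continuousAt
      Real.exp_monotone ?_
    refine ⟨0, ?_⟩
    rintro y ⟨n, rfl⟩
    exact hInonneg n
  calc limsup (fun n : ℕ => h (seqComp F γ n • P) ^ ((n : ℝ)⁻¹)) atTop
      ≤ ⨅ n : {n : ℕ // 1 ≤ n}, Real.exp (I (n : ℕ) / ((n : ℕ) : ℝ)) :=
        le_ciInf fun n => final n.1 n.2
    _ = Real.exp (⨅ n : {n : ℕ // 1 ≤ n}, I (n : ℕ) / ((n : ℕ) : ℝ)) := hiInf.symm
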